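/- The formal power series G(x) = ∑_{n≥0} F_n^3 x^n over ℚ satisfies (1+x−x^2)(1−4x−x^2) · G(x) = x(1−2x−x^2). -/

import Mathlib

open PowerSeries

theorem key (m : ℕ) : (Nat.fib (m+4) : ℚ)^3 = 3*(Nat.fib (m+3):ℚ)^3 + 6*(Nat.fib (m+2):ℚ)^3 - 3*(Nat.fib (m+1):ℚ)^3 - (Nat.fib m:ℚ)^3 := by
  have h2 : (Nat.fib (m+2) : ℚ) = Nat.fib m + Nat.fib (m+1) := by
    rw [Nat.fib_add_two]; push_cast; ring
  have h3 : (Nat.fib (m+3) : ℚ) = Nat.fib (m+1) + Nat.fib (m+2) := by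
    rw [show m+3 = (m+1)+2 from rfl, Nat.fib_add_two]; push_cast; ring
  have h4 : (Nat.fib (m+4) : ℚ) = Nat.fib (m+2) + Nat.fib (m+3) := by
    rw [show m+4 = (m+2)+2 from rfl, Nat.fib_add_two]; push_cast; ring
  rw [h4, h3, h2]; ring

theorem fib_cube_genfun :
    (1 + X - X ^ 2) * (1 - 4 * X - X ^ 2) * PowerSeries.mk (fun n => (Nat.fib n : ℚ) ^ 3)
      = X * (1 - 2 * X - X ^ 2) := by
  have hC3 : (C (3:ℚ)) = 3 := map_ofNat _ 3
  have hC6 : (C (6:ℚ)) = 6 := map_ofNat _ 6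
  have hC2 : (C (2:ℚ)) = 2 := map_ofNat _ 2
  set f : ℚ⟦X⟧ := PowerSeries.mk (fun n => (Nat.fib n : ℚ) ^ 3) with hf
  have hcf : ∀ k, coeff k f = (Nat.fib k : ℚ) ^ 3 := fun k => coeff_mk k _
  have hL : (1 + X - X ^ 2) * (1 - 4 * X - X ^ 2) * f
      = f - C (3:ℚ) * (X^1 * f) - C (6:ℚ) * (X^2 * f) + C (3:ℚ) * (X^3 * f) + X^4 * f := by
    rw [hC3, hC6]; ring
  have hR : (X : ℚ⟦X⟧) * (1 - 2 * X - X ^ 2) = X^1 - C (2:ℚ) * X^2 - X^3 := by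
    rw [hC2]; ring
  rw [hL, hR]
  ext n
  simp only [map_sub, map_add, coeff_C_mul, coeff_X_pow_mul', coeff_X_pow, hcf]
  match n with
  | 0 => norm_num
  | 1 => norm_num [hcf]
  | 2 => norm_num [hcf, Nat.fib]
  | 3 => norm_num [hcf, Nat.fib]
  | (m+4) =>
    rw [if_pos (by omega), if_pos (by omega), if_pos (by omega), if_pos (by omega),
      if_neg (by omega), if_neg (by omega), if_neg (by omega)]
    simp only [show m+4-1 = m+3 from rfl, show m+4-2 = m+2 from rfl,
      show m+4-3 = m+1 from rfl, show m+4-4 = m from rfl, hcf]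
    linarith [key m]
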